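/- arXiv:2211.09173 — 2 statements merged into one kernel-verified Lean document; each statement's English description precedes it below -/
import Mathlib

section
/- Let ϑ ∈ ℝ and set χ(k) = −2·arctan(ϑ·coth(kπ/2)). Then for k > 0, e^{iχ(k)/2} = sqrt( (sinh(kπ/2) − iϑ·cosh(kπ/2)) / (sinh(kπ/2) + iϑ·cosh(kπ/2)) ), where the square root is the principal branch. -/
open Real Complex

/-- With `χ(k) = −2·arctan(ϑ·coth(kπ/2))`, for `k > 0` the self-adjoint extension
phase satisfies `e^{iχ(k)/2} = √((sinh(kπ/2) − iϑ·cosh(kπ/2))/(sinh(kπ/2) + iϑ·cosh(kπ/2)))`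
(principal branch square root, as principal complex power `1/2`). -/
theorem stmt15 (ϑ : ℝ) (χ : ℝ → ℝ)
    (hχ : ∀ k, χ k = -2 * Real.arctan (ϑ * (Real.cosh (k * π / 2) / Real.sinh (k * π / 2)))) :
    ∀ k : ℝ, 0 < k →
      Complex.exp (Complex.I * ((χ k : ℝ) : ℂ) / 2)
        = ((((Real.sinh (k * π / 2) : ℝ) : ℂ) - Complex.I * (ϑ : ℂ) * ((Real.cosh (k * π / 2) : ℝ) : ℂ))
            / (((Real.sinh (k * π / 2) : ℝ) : ℂ) + Complex.I * (ϑ : ℂ) * ((Real.cosh (k * π / 2) : ℝ) : ℂ)))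
          ^ ((1 / 2 : ℂ)) := by
  intro k hk
  set s : ℝ := Real.sinh (k * π / 2) with hsdef
  set c : ℝ := Real.cosh (k * π / 2) with hcdef
  have hs0 : 0 < s := Real.sinh_pos_iff.2 (by positivity)
  set x : ℝ := ϑ * (c / s) with hxdef
  set α : ℝ := Real.arctan x with hαdef
  have hq : (0:ℝ) < Real.sqrt (1 + x ^ 2) := Real.sqrt_pos.2 (by positivity)
  set r : ℝ := s * Real.sqrt (1 + x ^ 2) with hrdef
  have hcos : r * Real.cos α = s := by
    rw [hαdef, Real.cos_arctan, hrdef]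
    field_simp
  have hsin : r * Real.sin α = ϑ * c := by
    rw [hαdef, Real.sin_arctan, hrdef, hxdef]
    field_simp
  have h1 : (r:ℂ) * Complex.cos (α:ℂ) = (s:ℂ) := by
    rw [← Complex.ofReal_cos]; exact_mod_cast congrArg Complex.ofReal hcos
  have h2 : (r:ℂ) * Complex.sin (α:ℂ) = (ϑ:ℂ) * (c:ℂ) := by
    rw [← Complex.ofReal_sin]; exact_mod_cast congrArg Complex.ofReal hsin
  have hzp : (s:ℂ) + Complex.I * (ϑ:ℂ) * (c:ℂ) = (r:ℂ) * Complex.exp ((α:ℂ) * Complex.I) := by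
    rw [Complex.exp_mul_I]
    linear_combination -h1 - Complex.I * h2
  have hzm : (s:ℂ) - Complex.I * (ϑ:ℂ) * (c:ℂ) = (r:ℂ) * Complex.exp ((-α:ℂ) * Complex.I) := by
    rw [Complex.exp_mul_I, Complex.cos_neg, Complex.sin_neg]
    linear_combination -h1 + Complex.I * h2
  have hr0 : (r:ℂ) ≠ 0 := by
    exact_mod_cast (mul_pos hs0 hq).ne'
  have hbase : ((s:ℂ) - Complex.I * (ϑ:ℂ) * (c:ℂ)) / ((s:ℂ) + Complex.I * (ϑ:ℂ) * (c:ℂ))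
      = Complex.exp (((-2 * α : ℝ):ℂ) * Complex.I) := by
    rw [hzp, hzm, mul_div_mul_left _ _ hr0, ← Complex.exp_sub]
    congr 1
    push_cast
    ring
  rw [hbase]
  rw [Complex.cpow_def_of_ne_zero (Complex.exp_ne_zero _)]
  have hα1 : α < π / 2 := Real.arctan_lt_pi_div_two x
  have hα2 : -(π / 2) < α := Real.neg_pi_div_two_lt_arctan x
  have him : (((-2 * α : ℝ):ℂ) * Complex.I).im = -2 * α := by
    simp
  rw [Complex.log_exp (by rw [him]; linarith) (by rw [him]; linarith)]
  have hχk : χ k = -2 * α := by rw [hχ k]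
  congr 1
  rw [hχk]
  push_cast
  ring
end

section
/- Let F̂ be an operator-valued function of u and suppose Ĥ_u is a family of self-adjoint operators on a Hilbert space satisfying ⟨Ĥ_u²⟩_ψ + iħ·∂_u⟨Ĥ_u⟩_ψ = ⟨F̂(u)⟩_ψ for all suitable states ψ, where F̂(u) is self-adjoint for each u. If ∂_u⟨Ĥ_u⟩_ψ ≠ 0 for some state ψ and some u, a contradiction follows: the left-hand side has nonzero imaginary part while the right-hand side is real. Hence any family Ĥ_u of self-adjoint operators satisfying Ĥ_u² + iħ·∂_uĤ_u = F̂(u) (in expectation values on a dense set of states) must satisfy ∂_u⟨Ĥ_u⟩_ψ = 0 for all such ψ. -/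
open Complex

/-- No self-adjoint time-dependent Hamiltonian for the `v`-clock theory: if `Ĥ_u`
and `F̂(u)` are families of symmetric operators on a complex inner product space
with `⟨Ĥ_u²⟩_ψ + iħ·∂_u⟨Ĥ_u⟩_ψ = ⟨F̂(u)⟩_ψ` for all states `ψ`, then
`∂_u⟨Ĥ_u⟩_ψ = 0` for all `ψ` and `u` (otherwise the left side would have a nonzero
imaginary part while the right side is real). -/
theorem stmt19 {E : Type*} [NormedAddCommGroup E] [InnerProductSpace ℂ E]
    (hbar : ℝ) (hhbar : 0 < hbar)
    (H F : ℝ → E →ₗ[ℂ] E)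
    (hHsym : ∀ u : ℝ, ∀ x y : E, (inner ℂ ((H u) x) y : ℂ) = inner ℂ x ((H u) y))
    (hFsym : ∀ u : ℝ, ∀ x y : E, (inner ℂ ((F u) x) y : ℂ) = inner ℂ x ((F u) y))
    (heq : ∀ (ψ : E) (u : ℝ),
      (inner ℂ ψ ((H u) ((H u) ψ)) : ℂ)
        + Complex.I * (hbar : ℂ) * deriv (fun s : ℝ => (inner ℂ ψ ((H s) ψ) : ℂ)) u
      = inner ℂ ψ ((F u) ψ)) :
    ∀ (ψ : E) (u : ℝ), deriv (fun s : ℝ => (inner ℂ ψ ((H s) ψ) : ℂ)) u = 0 := by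
  intro ψ u
  set d : ℂ := deriv (fun s : ℝ => (inner ℂ ψ ((H s) ψ) : ℂ)) u with hd
  -- the function s ↦ ⟨ψ, H s ψ⟩ is real-valued, hence its deriv is self-conjugate
  have hreal : ∀ s : ℝ, star ((inner ℂ ψ ((H s) ψ) : ℂ)) = inner ℂ ψ ((H s) ψ) := by
    intro s
    rw [Complex.star_def, inner_conj_symm, hHsym]
  have hdstar : star d = d := by
    rw [hd, ← deriv.star]
    congr 1
    funext s
    exact hreal s
  have hA : star ((inner ℂ ψ ((H u) ((H u) ψ)) : ℂ)) = inner ℂ ψ ((H u) ((H u) ψ)) := by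
    rw [Complex.star_def, inner_conj_symm]
    exact (hHsym u ((H u) ψ) ψ).trans (hHsym u ψ ((H u) ψ))
  have hB : star ((inner ℂ ψ ((F u) ψ) : ℂ)) = inner ℂ ψ ((F u) ψ) := by
    rw [Complex.star_def, inner_conj_symm, hFsym]
  have h1 := heq ψ u
  have h2 := congrArg star h1
  simp only [star_add, star_mul, star_ofNat, Complex.star_def, Complex.conj_I,
    Complex.conj_ofReal, hA, hB, hdstar, map_mul] at h2
  -- h2 : A + d * ħ * (-I) = B (up to arrangement); combine with h1
  have hx : Complex.I * (hbar : ℂ) * d = - (Complex.I * (hbar : ℂ) * d) := by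
    have h3 := h1.trans h2.symm
    rw [← Complex.star_def, ← hd, hdstar] at h3
    ring_nf at h3 ⊢
    linear_combination h3
  have hz : Complex.I * (hbar : ℂ) * d = 0 := by
    have h4 : Complex.I * (hbar : ℂ) * d + Complex.I * (hbar : ℂ) * d = 0 := by
      linear_combination hx
    linear_combination h4 / 2
  simpa [mul_eq_zero, Complex.I_ne_zero, Complex.ofReal_eq_zero, hhbar.ne'] using hz
end
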